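/- Let $\Omega \subset \mathbb{R}^2$ be a bounded convex polygonal domain with boundary $\Gamma$, let $X = H^2(\Omega) \cap H^1_0(\Omega)$. For any $f \in H^{-2}(\Omega)$ (the dual of $X$) and $u \in \tilde H^{-1/2}(\Gamma)$, the ultra weak formulation $(y, \Delta\phi) = -(f,\phi) + \langle u, \partial_n \phi\rangle$ for all $\phi \in X$ has a unique solution $y \in L_2(\Omega)$, and it satisfies the a priori estimate $\|y\|_{L_2(\Omega)} \le C(\|f\|_{H^{-2}(\Omega)} + \|u\|_{\tilde H^{-1/2}(\Gamma)})$. -/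

import Mathlib

/-- Ω ⊂ ℝ² a bounded convex polygonal domain with boundary Γ,
`X = H²(Ω) ∩ H¹₀(Ω)` (with the `H²` norm), `Y = L²(Ω)`.
The Laplacian `Δ : X → L²(Ω)` is a continuous bijection (elliptic regularity on
convex domains).  The datum `f ∈ H⁻²(Ω)` is a continuous linear functional on `X`,
and `u ∈ H̃^{-1/2}(Γ)` is represented by the continuous linear functional
`φ ↦ ⟨u, ∂ₙφ⟩` on `X`, whose dual norm is exactly the `H̃^{-1/2}(Γ)` norm.
Then the ultra weak formulation `(y, Δφ) = -(f,φ) + ⟨u, ∂ₙφ⟩ ∀ φ ∈ X`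
has a unique solution `y ∈ L²(Ω)`, which satisfies
`‖y‖_{L²(Ω)} ≤ C (‖f‖_{H⁻²} + ‖u‖_{H̃^{-1/2}})`. -/
theorem stmt_0
    {Y X : Type*} [NormedAddCommGroup Y] [InnerProductSpace ℝ Y] [CompleteSpace Y]
    [NormedAddCommGroup X] [NormedSpace ℝ X] [CompleteSpace X]
    (Lap : X →L[ℝ] Y) (hΔ : Function.Bijective Lap) :
    ∃ C : ℝ, 0 < C ∧ ∀ f u : X →L[ℝ] ℝ,
      (∃! y : Y, ∀ φ : X, (inner ℝ y (Lap φ) : ℝ) = -(f φ) + u φ) ∧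
      ∀ y : Y, (∀ φ : X, (inner ℝ y (Lap φ) : ℝ) = -(f φ) + u φ) →
        ‖y‖ ≤ C * (‖f‖ + ‖u‖) := by
  -- Build the continuous linear equivalence from the bijection (open mapping theorem).
  have hker : LinearMap.ker (Lap : X →ₗ[ℝ] Y) = ⊥ := LinearMap.ker_eq_bot_of_injective (f := (Lap : X →ₗ[ℝ] Y)) hΔ.1
  have hrange : LinearMap.range (Lap : X →ₗ[ℝ] Y) = ⊤ := (LinearMap.range_eq_top (f := (Lap : X →ₗ[ℝ] Y))).mpr hΔ.2
  let e : X ≃L[ℝ] Y := ContinuousLinearEquiv.ofBijective Lap hker hrange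
  set M : ℝ := ‖(e.symm : Y →L[ℝ] X)‖ with hM
  have hM0 : 0 ≤ M := norm_nonneg _
  refine ⟨M + 1, by linarith, fun f u => ?_⟩
  -- The Riesz representative of (u - f) ∘ e.symm
  have key : ∀ f u : X →L[ℝ] ℝ, True := fun _ _ => trivial
  set g : Y →L[ℝ] ℝ := (u - f).comp (e.symm : Y →L[ℝ] X) with hg
  set y₀ : Y := (InnerProductSpace.toDual ℝ Y).symm g with hy₀
  have hy₀eq : ∀ z : Y, (inner ℝ y₀ z : ℝ) = g z := fun z => by
    rw [hy₀, InnerProductSpace.toDual_symm_apply]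
  have hsol : ∀ φ : X, (inner ℝ y₀ (Lap φ) : ℝ) = -(f φ) + u φ := by
    intro φ
    have h1 : e.symm (Lap φ) = φ := e.symm_apply_apply φ
    rw [hy₀eq]
    simp [hg, h1]
    ring
  -- uniqueness
  have huniq : ∀ y : Y, (∀ φ : X, (inner ℝ y (Lap φ) : ℝ) = -(f φ) + u φ) → y = y₀ := by
    intro y hy
    have : ∀ z : Y, (inner ℝ (y - y₀) z : ℝ) = 0 := by
      intro z
      obtain ⟨φ, rfl⟩ := hΔ.2 z
      rw [inner_sub_left, hy φ, hsol φ]; ring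
    have := this (y - y₀)
    rw [inner_self_eq_zero] at this
    exact sub_eq_zero.mp this
  refine ⟨⟨y₀, hsol, huniq⟩, ?_⟩
  intro y hy
  rw [huniq y hy]
  have h1 : ‖y₀‖ = ‖g‖ := by
    rw [hy₀]
    exact ((InnerProductSpace.toDual ℝ Y).symm.norm_map g)
  have h2 : ‖g‖ ≤ ‖u - f‖ * M := (u - f).opNorm_comp_le _
  have h3 : ‖u - f‖ ≤ ‖u‖ + ‖f‖ := norm_sub_le _ _
  have hfu : 0 ≤ ‖f‖ + ‖u‖ := by positivity
  calc ‖y₀‖ = ‖g‖ := h1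
    _ ≤ ‖u - f‖ * M := h2
    _ ≤ (‖f‖ + ‖u‖) * M := by nlinarith [norm_nonneg (u - f)]
    _ ≤ (M + 1) * (‖f‖ + ‖u‖) := by nlinarith
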